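/- Let λ ∈ (0,1), θ = (1−λ²)/(π(1+λ²)), γ > 0, and define V(x₁, x₂) = (1 + θ·arctan x₂)(x₂²/2 + γx₁). Then there exists a continuous positive definite function ρ : ℝ≥0 → ℝ≥0 (i.e., ρ(0) = 0 and ρ(s) > 0 for all s > 0) such that for all x₁ ≥ 0 and x₂ ∈ ℝ: x₂·(∂V/∂x₁)(x₁, x₂) − γ·(∂V/∂x₂)(x₁, x₂) ≤ −ρ(√(x₁² + x₂²)). -/

import Mathlib

/-- There is a continuous positive definite function `ρ` such that the derivative of the
bouncing-ball Lyapunov function `V(x₁, x₂) = (1 + θ·arctan x₂)(x₂²/2 + γx₁)` along the flow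
vector field `f(x₁, x₂) = (x₂, -γ)` satisfies
`x₂·∂V/∂x₁ - γ·∂V/∂x₂ ≤ -ρ(√(x₁² + x₂²))` on the half-plane `x₁ ≥ 0`. -/
theorem bouncing_ball_V_flow_decrease (lam θ γ : ℝ)
    (hlam : lam ∈ Set.Ioo (0 : ℝ) 1)
    (hθ : θ = (1 - lam ^ 2) / (Real.pi * (1 + lam ^ 2))) (hγ : 0 < γ) :
    ∃ ρ : ℝ → ℝ, ContinuousOn ρ (Set.Ici 0) ∧ ρ 0 = 0 ∧ (∀ s : ℝ, 0 < s → 0 < ρ s) ∧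
      ∀ x₁ x₂ : ℝ, 0 ≤ x₁ →
        x₂ * deriv (fun a : ℝ => (1 + θ * Real.arctan x₂) * (x₂ ^ 2 / 2 + γ * a)) x₁ -
            γ * deriv (fun b : ℝ => (1 + θ * Real.arctan b) * (b ^ 2 / 2 + γ * x₁)) x₂ ≤
          -ρ (Real.sqrt (x₁ ^ 2 + x₂ ^ 2)) := by
  obtain ⟨hl0, hl1⟩ := hlam
  have hθpos : 0 < θ := by
    rw [hθ]
    apply div_pos
    · nlinarith
    · positivity
  set c : ℝ := min γ (1/2) with hc
  have hc0 : 0 < c := lt_min hγ (by norm_num)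
  have hcγ : c ≤ γ := min_le_left _ _
  have hch : c ≤ 1/2 := min_le_right _ _
  refine ⟨fun s => γ * θ * c * s ^ 2 / ((1 + s) * (1 + s ^ 2)), ?_, by norm_num, ?_, ?_⟩
  · apply ContinuousOn.div (by fun_prop) (by fun_prop)
    intro s hs
    have : (0:ℝ) ≤ s := hs
    positivity
  · intro s hs
    apply div_pos (by positivity) (by positivity)
  · intro x₁ x₂ hx₁
    have hd1 : deriv (fun a : ℝ => (1 + θ * Real.arctan x₂) * (x₂ ^ 2 / 2 + γ * a)) x₁ =
        (1 + θ * Real.arctan x₂) * γ := by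
      have : HasDerivAt (fun a : ℝ => (1 + θ * Real.arctan x₂) * (x₂ ^ 2 / 2 + γ * a))
          ((1 + θ * Real.arctan x₂) * γ) x₁ := by
        have h : HasDerivAt (fun a : ℝ => x₂ ^ 2 / 2 + γ * a) γ x₁ := by
          simpa using ((hasDerivAt_id x₁).const_mul γ).const_add (x₂ ^ 2 / 2)
        exact h.const_mul _
      exact this.deriv
    have hd2 : deriv (fun b : ℝ => (1 + θ * Real.arctan b) * (b ^ 2 / 2 + γ * x₁)) x₂ =
        θ * (1 / (1 + x₂ ^ 2)) * (x₂ ^ 2 / 2 + γ * x₁) + (1 + θ * Real.arctan x₂) * x₂ := by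
      have h1 : HasDerivAt (fun b : ℝ => 1 + θ * Real.arctan b) (θ * (1 / (1 + x₂ ^ 2))) x₂ :=
        ((Real.hasDerivAt_arctan x₂).const_mul θ).const_add 1
      have h2 : HasDerivAt (fun b : ℝ => b ^ 2 / 2 + γ * x₁) x₂ x₂ := by
        have := ((hasDerivAt_pow 2 x₂).div_const 2).add_const (γ * x₁)
        simpa using this
      have h3 : HasDerivAt (fun b : ℝ => (1 + θ * Real.arctan b) * (b ^ 2 / 2 + γ * x₁)) (θ * (1 / (1 + x₂ ^ 2)) * (x₂ ^ 2 / 2 + γ * x₁) + (1 + θ * Real.arctan x₂) * x₂) x₂ := h1.mul h2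
      exact h3.deriv
    rw [hd1, hd2]
    have hden : (0:ℝ) < 1 + x₂ ^ 2 := by positivity
    set r : ℝ := Real.sqrt (x₁ ^ 2 + x₂ ^ 2) with hrdef
    have hr0 : 0 ≤ r := Real.sqrt_nonneg _
    have hr2 : r ^ 2 = x₁ ^ 2 + x₂ ^ 2 := Real.sq_sqrt (by positivity)
    have hx2r : x₂ ^ 2 ≤ r ^ 2 := by nlinarith
    have hx1r : x₁ ≤ r := by nlinarith
    have hQ : (0:ℝ) ≤ x₂ ^ 2 / 2 + γ * x₁ := by positivity
    have hkey : c * r ^ 2 ≤ (x₂ ^ 2 / 2 + γ * x₁) * (1 + r) := by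
      nlinarith [mul_nonneg (mul_nonneg hγ.le hx₁) (sub_nonneg.2 hx1r),
        mul_nonneg (by positivity : (0:ℝ) ≤ x₂ ^ 2 / 2) hr0]
    have hmain : γ * θ * c * r ^ 2 / ((1 + r) * (1 + r ^ 2)) ≤
        γ * θ * (x₂ ^ 2 / 2 + γ * x₁) / (1 + x₂ ^ 2) := by
      rw [div_le_div_iff₀ (by positivity) hden]
      have h1 : c * r ^ 2 * (1 + x₂ ^ 2) ≤ (x₂ ^ 2 / 2 + γ * x₁) * (1 + r) * (1 + r ^ 2) := by
        nlinarith [mul_nonneg (mul_nonneg hc0.le (sq_nonneg r)) (sub_nonneg.2 hx2r),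
          mul_le_mul_of_nonneg_right hkey (by positivity : (0:ℝ) ≤ 1 + r ^ 2)]
      calc γ * θ * c * r ^ 2 * (1 + x₂ ^ 2) = γ * θ * (c * r ^ 2 * (1 + x₂ ^ 2)) := by ring
        _ ≤ γ * θ * ((x₂ ^ 2 / 2 + γ * x₁) * (1 + r) * (1 + r ^ 2)) :=
            mul_le_mul_of_nonneg_left h1 (by positivity)
        _ = γ * θ * (x₂ ^ 2 / 2 + γ * x₁) * ((1 + r) * (1 + r ^ 2)) := by ring
    have heq : x₂ * ((1 + θ * Real.arctan x₂) * γ) -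
        γ * (θ * (1 / (1 + x₂ ^ 2)) * (x₂ ^ 2 / 2 + γ * x₁) + (1 + θ * Real.arctan x₂) * x₂) =
        -(γ * θ * (x₂ ^ 2 / 2 + γ * x₁) / (1 + x₂ ^ 2)) := by
      field_simp
      ring
    rw [heq]
    linarith [hmain]
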